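/- Let S be a countable set, p₁ a probability mass function on S, and γ₁ : S → (0,∞). Let D ≥ 1, σ > 0, x₂ ∈ ℝ^D, and Δ ∈ ℝ^D with r := ‖Δ‖₂ > 0. Let w be the product of the discrete measure with mass function p₁ on S and the D-fold product of one-dimensional Gaussian measures N((x₂)ᵢ, σ²) on ℝ^D. Define γ₂(z₂) = exp(σ⁻²·Δᵀ(z₂ − x₂) − r²/(2σ²)) and γ(z₁,z₂) = γ₁(z₁)·γ₂(z₂). Then for every t > 0, w({(z₁,z₂) : γ(z₁,z₂) ≤ t}) = Σ_{z₁∈S} p₁(z₁) · Φ((r²/2 + σ²(log t − log γ₁(z₁)))/(σr)), where Φ is the standard normal cumulative distribution function. -/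

import Mathlib

open MeasureTheory ProbabilityTheory Real Set

open scoped ENNReal NNReal

set_option maxHeartbeats 1000000

/-- The standard normal cumulative distribution function `Φ`. -/
noncomputable def stdNormalCDF (t : ℝ) : ℝ :=
  ((gaussianReal 0 1) (Set.Iic t)).toReal

/-- The discrete measure on a countable set with mass function `p`. -/
noncomputable def discreteMeasure {S : Type*} [MeasurableSpace S] (p : S → ℝ) :
    Measure S :=
  Measure.sum (fun z => ENNReal.ofReal (p z) • Measure.dirac z)

private lemma gaussianPDFReal_conv (m₁ m₂ : ℝ) {v₁ v₂ : ℝ≥0} (h₁ : v₁ ≠ 0) (h₂ : v₂ ≠ 0) (u : ℝ) :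
    ∫ x, gaussianPDFReal m₁ v₁ x * gaussianPDFReal m₂ v₂ (u - x)
      = gaussianPDFReal (m₁ + m₂) (v₁ + v₂) u := by
  set a : ℝ := (v₁ : ℝ) with ha_def
  set b : ℝ := (v₂ : ℝ) with hb_def
  have ha : 0 < a := lt_of_le_of_ne v₁.coe_nonneg (by simpa [ha_def, eq_comm] using h₁)
  have hb : 0 < b := lt_of_le_of_ne v₂.coe_nonneg (by simpa [hb_def, eq_comm] using h₂)
  have hab : 0 < a + b := by linarith
  set k : ℝ := (a + b) / (2 * a * b) with hk_def
  have hk : 0 < k := by positivity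
  set s : ℝ := u - m₁ - m₂ with hs_def
  set c : ℝ := m₁ + a * s / (a + b) with hc_def
  have hpt : ∀ x, gaussianPDFReal m₁ v₁ x * gaussianPDFReal m₂ v₂ (u - x)
      = (gaussianPDFReal (m₁ + m₂) (v₁ + v₂) u * (Real.sqrt (π / k))⁻¹)
        * Real.exp (-k * (x - c) ^ 2) := by
    intro x
    have hconst : (Real.sqrt (2 * π * a))⁻¹ * (Real.sqrt (2 * π * b))⁻¹
        = (Real.sqrt (2 * π * (a + b)))⁻¹ * (Real.sqrt (π / k))⁻¹ := by
      rw [← mul_inv, ← mul_inv, ← Real.sqrt_mul (by positivity), ← Real.sqrt_mul (by positivity)]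
      congr 1
      rw [hk_def]
      field_simp
    have hexp : -(x - m₁) ^ 2 / (2 * a) + -(u - x - m₂) ^ 2 / (2 * b)
        = -s ^ 2 / (2 * (a + b)) + -k * (x - c) ^ 2 := by
      rw [hk_def, hc_def, hs_def]
      field_simp
      ring
    simp only [gaussianPDFReal]
    push_cast
    rw [show ((v₁ : ℝ) : ℝ) = a from rfl]
    calc (Real.sqrt (2 * π * a))⁻¹ * rexp (-(x - m₁) ^ 2 / (2 * a)) *
          ((Real.sqrt (2 * π * b))⁻¹ * rexp (-(u - x - m₂) ^ 2 / (2 * b)))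
        = ((Real.sqrt (2 * π * a))⁻¹ * (Real.sqrt (2 * π * b))⁻¹) *
            rexp (-(x - m₁) ^ 2 / (2 * a) + -(u - x - m₂) ^ 2 / (2 * b)) := by
          rw [Real.exp_add]; ring
      _ = ((Real.sqrt (2 * π * (a + b)))⁻¹ * (Real.sqrt (π / k))⁻¹) *
            (rexp (-s ^ 2 / (2 * (a + b))) * rexp (-k * (x - c) ^ 2)) := by
          rw [hconst, hexp, Real.exp_add]
      _ = (Real.sqrt (2 * π * (a + b)))⁻¹ * rexp (-(u - (m₁ + m₂)) ^ 2 / (2 * (a + b)))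
            * (Real.sqrt (π / k))⁻¹ * rexp (-k * (x - c) ^ 2) := by
          rw [hs_def]; ring_nf
  simp_rw [hpt]
  rw [integral_const_mul]
  have hint : ∫ x, rexp (-k * (x - c) ^ 2) = Real.sqrt (π / k) := by
    rw [integral_sub_right_eq_self (μ := volume) (fun x => rexp (-k * x ^ 2)) c]
    exact integral_gaussian k
  rw [hint, mul_assoc, inv_mul_cancel₀ (by positivity), mul_one]

private lemma gaussianReal_conv_map (m₁ m₂ : ℝ) (v₁ v₂ : ℝ≥0) :
    ((gaussianReal m₁ v₁).prod (gaussianReal m₂ v₂)).map (fun p => p.1 + p.2)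
      = gaussianReal (m₁ + m₂) (v₁ + v₂) := by
  by_cases h₁ : v₁ = 0
  · subst h₁
    rw [gaussianReal_zero_var, Measure.dirac_prod,
      Measure.map_map measurable_add measurable_prodMk_left]
    simpa [add_comm, Function.comp_def] using gaussianReal_map_const_add (μ := m₂) (v := v₂) m₁
  by_cases h₂ : v₂ = 0
  · subst h₂
    rw [gaussianReal_zero_var, Measure.prod_dirac,
      Measure.map_map measurable_add (measurable_prodMk_right (y := m₂))]
    simpa [Function.comp_def] using gaussianReal_map_add_const (μ := m₁) (v := v₁) m₂
  -- main case
  have h₁₂ : v₁ + v₂ ≠ 0 := by simp [h₁]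
  refine Measure.ext_of_Iic _ _ (fun q => ?_)
  rw [Measure.map_apply (by fun_prop) measurableSet_Iic]
  have hA : MeasurableSet ((fun p : ℝ × ℝ => p.1 + p.2) ⁻¹' Iic q) :=
    measurable_add measurableSet_Iic
  rw [Measure.prod_apply hA]
  have hslice : ∀ x : ℝ, (Prod.mk x ⁻¹' ((fun p : ℝ × ℝ => p.1 + p.2) ⁻¹' Iic q)) = Iic (q - x) := by
    intro x
    ext y
    simp [le_sub_iff_add_le, add_comm]
  simp_rw [hslice]
  -- expand gaussianReal m₁ v₁ as withDensity
  have hmono : Antitone (fun x => gaussianReal m₂ v₂ (Iic (q - x))) := by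
    intro x x' hxx'
    exact measure_mono (Iic_subset_Iic.2 (by linarith))
  rw [gaussianReal_of_var_ne_zero m₁ h₁,
    lintegral_withDensity_eq_lintegral_mul _ (measurable_gaussianPDF m₁ v₁) hmono.measurable]
  have hinner : ∀ x : ℝ, gaussianReal m₂ v₂ (Iic (q - x))
      = ∫⁻ u in Iic q, gaussianPDF m₂ v₂ (u - x) := by
    intro x
    rw [gaussianReal_apply m₂ h₂]
    have : ∫⁻ u in Iic q, gaussianPDF m₂ v₂ (u - x)
        = ∫⁻ u, (Iic q).indicator (fun u' => gaussianPDF m₂ v₂ (u' - x)) u := by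
      rw [lintegral_indicator measurableSet_Iic]
    rw [this]
    have hmap := lintegral_map
      (f := (Iic q).indicator (fun u' => gaussianPDF m₂ v₂ (u' - x)))
      (g := fun y : ℝ => y + x) (μ := volume)
      ((measurable_gaussianPDF m₂ v₂ |>.comp (measurable_id.sub_const x)).indicator
        measurableSet_Iic)
      (measurable_add_const x)
    rw [map_add_right_eq_self volume x] at hmap
    rw [hmap]
    have : ∀ y : ℝ, (Iic q).indicator (fun u' => gaussianPDF m₂ v₂ (u' - x)) (y + x)
        = (Iic (q - x)).indicator (gaussianPDF m₂ v₂) y := by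
      intro y
      by_cases hy : y ≤ q - x
      · rw [indicator_of_mem (by simpa [le_sub_iff_add_le] using hy),
          indicator_of_mem (by simpa using hy)]
        simp
      · rw [indicator_of_notMem (by simpa [le_sub_iff_add_le] using hy),
          indicator_of_notMem (by simpa using hy)]
    simp_rw [this]
    rw [← lintegral_indicator measurableSet_Iic]
  simp_rw [Pi.mul_apply, hinner]
  rw [gaussianReal_apply _ h₁₂]
  -- swap the integrals
  calc ∫⁻ x, gaussianPDF m₁ v₁ x * ∫⁻ u in Iic q, gaussianPDF m₂ v₂ (u - x)
      = ∫⁻ x, ∫⁻ u in Iic q, gaussianPDF m₁ v₁ x * gaussianPDF m₂ v₂ (u - x) := by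
        congr 1 with x
        rw [lintegral_const_mul (μ := volume.restrict (Iic q)) (gaussianPDF m₁ v₁ x)
          (f := fun u => gaussianPDF m₂ v₂ (u - x))
          ((measurable_gaussianPDF m₂ v₂).comp (measurable_id.sub_const x))]
    _ = ∫⁻ u in Iic q, ∫⁻ x, gaussianPDF m₁ v₁ x * gaussianPDF m₂ v₂ (u - x) := by
        refine lintegral_lintegral_swap ?_
        exact (((measurable_gaussianPDF m₁ v₁).comp measurable_fst).mul
          ((measurable_gaussianPDF m₂ v₂).comp
            (measurable_snd.sub measurable_fst))).aemeasurable
    _ = ∫⁻ u in Iic q, gaussianPDF (m₁ + m₂) (v₁ + v₂) u := by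
        refine setLIntegral_congr_fun measurableSet_Iic (fun u _ => ?_)
        have hb : (0:ℝ) < Real.sqrt (2 * π * (v₂ : ℝ)) := by
          have : 0 < (v₂ : ℝ) := lt_of_le_of_ne v₂.coe_nonneg (by simpa [eq_comm] using h₂)
          positivity
        have hint : Integrable (fun x => gaussianPDFReal m₁ v₁ x * gaussianPDFReal m₂ v₂ (u - x)) := by
          refine Integrable.mono' ((integrable_gaussianPDFReal m₁ v₁).mul_const
            (Real.sqrt (2 * π * (v₂ : ℝ)))⁻¹)
            (((measurable_gaussianPDFReal m₁ v₁).mul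
              ((measurable_gaussianPDFReal m₂ v₂).comp
                (measurable_const.sub measurable_id))).aestronglyMeasurable)
            (ae_of_all _ (fun x => ?_))
          rw [Real.norm_of_nonneg (mul_nonneg (gaussianPDFReal_nonneg _ _ _)
            (gaussianPDFReal_nonneg _ _ _))]
          refine mul_le_mul_of_nonneg_left ?_ (gaussianPDFReal_nonneg _ _ _)
          rw [gaussianPDFReal]
          calc (Real.sqrt (2 * π * (v₂:ℝ)))⁻¹ * rexp (-(u - x - m₂) ^ 2 / (2 * (v₂:ℝ)))
              ≤ (Real.sqrt (2 * π * (v₂:ℝ)))⁻¹ * 1 := by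
                refine mul_le_mul_of_nonneg_left ?_ (by positivity)
                rw [Real.exp_le_one_iff]
                have : (0:ℝ) < (v₂ : ℝ) := lt_of_le_of_ne v₂.coe_nonneg (by simpa [eq_comm] using h₂)
                have h2 : (0:ℝ) ≤ (u - x - m₂)^2 := sq_nonneg _
                have : (0:ℝ) < 2 * (v₂:ℝ) := by linarith
                exact div_nonpos_of_nonpos_of_nonneg (by linarith) this.le
            _ = (Real.sqrt (2 * π * (v₂:ℝ)))⁻¹ := mul_one _
        calc ∫⁻ x, gaussianPDF m₁ v₁ x * gaussianPDF m₂ v₂ (u - x)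
            = ∫⁻ x, ENNReal.ofReal (gaussianPDFReal m₁ v₁ x * gaussianPDFReal m₂ v₂ (u - x)) := by
              congr 1 with x
              rw [gaussianPDF, gaussianPDF, ← ENNReal.ofReal_mul (gaussianPDFReal_nonneg _ _ _)]
          _ = ENNReal.ofReal (∫ x, gaussianPDFReal m₁ v₁ x * gaussianPDFReal m₂ v₂ (u - x)) :=
              (ofReal_integral_eq_lintegral_ofReal hint
                (ae_of_all _ (fun x => mul_nonneg (gaussianPDFReal_nonneg _ _ _)
                  (gaussianPDFReal_nonneg _ _ _)))).symm
          _ = gaussianPDF (m₁ + m₂) (v₁ + v₂) u := by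
              rw [gaussianPDFReal_conv m₁ m₂ h₁ h₂ u]; rfl

private lemma map_pi_gaussian_linear :
    ∀ (n : ℕ) (Δ μ : Fin n → ℝ) (v : ℝ≥0),
    (Measure.pi fun i => gaussianReal (μ i) v).map (fun z => ∑ i, Δ i * z i)
      = gaussianReal (∑ i, Δ i * μ i) ((∑ i, (Δ i ^ 2).toNNReal) * v) := by
  intro n
  induction n with
  | zero =>
    intro Δ μ v
    simp only [Finset.univ_eq_empty, Finset.sum_empty]
    rw [show (fun z : Fin 0 → ℝ => (0:ℝ)) = (fun _ => 0) from rfl, Measure.map_const]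
    simp [gaussianReal_zero_var]
  | succ n ih =>
    intro Δ μ v
    set e := MeasurableEquiv.piFinSuccAbove (fun _ : Fin (n+1) => ℝ) 0 with he
    have mp := measurePreserving_piFinSuccAbove (fun i => gaussianReal (μ i) v) 0
    have hpi : (Measure.pi fun i => gaussianReal (μ i) v)
        = ((gaussianReal (μ 0) v).prod
            (Measure.pi fun j => gaussianReal (μ ((0 : Fin (n+1)).succAbove j)) v)).map e.symm :=
      ((mp.symm e).map_eq).symm
    rw [hpi, Measure.map_map (by fun_prop) e.symm.measurable]
    have hfun : ((fun z : Fin (n+1) → ℝ => ∑ i, Δ i * z i) ∘ e.symm)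
        = (fun p : ℝ × ℝ => p.1 + p.2) ∘
            (Prod.map (fun x : ℝ => Δ 0 * x)
              (fun y : Fin n → ℝ => ∑ j, Δ ((0 : Fin (n+1)).succAbove j) * y j)) := by
      funext p
      simp only [Function.comp_apply, Prod.map_apply]
      rw [Fin.sum_univ_succAbove (fun i => Δ i * (e.symm p) i) 0]
      have h0 : (e.symm p) 0 = p.1 := by
        simp [he, MeasurableEquiv.piFinSuccAbove]
      have hj : ∀ j, (e.symm p) ((0 : Fin (n+1)).succAbove j) = p.2 j := by
        intro j; simp [he, MeasurableEquiv.piFinSuccAbove]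
      rw [h0]
      simp_rw [hj]
      rfl
    rw [hfun, ← Measure.map_map (by fun_prop) (by fun_prop),
      ← Measure.map_prod_map _ _ (by fun_prop) (by fun_prop),
      gaussianReal_map_const_mul (Δ 0), ih, gaussianReal_conv_map]
    congr 1
    · rw [Fin.sum_univ_succAbove (fun i => Δ i * μ i) 0]
    · rw [Fin.sum_univ_succAbove (fun i => ((Δ i ^ 2).toNNReal : ℝ≥0)) 0, add_mul]
      congr 1
      congr 1
      ext
      simp [Real.toNNReal_of_nonneg (sq_nonneg (Δ 0))]

/-- **Clean-side capacity identity of hybrid randomized smoothing.**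
Under the clean smoothing distribution `w = p₁ ⊗ N(x₂, σ²I_D)`, the joint likelihood
ratio `γ(z₁,z₂) = γ₁(z₁)·exp(σ⁻²Δᵀ(z₂−x₂) − r²/(2σ²))` satisfies
`w({γ ≤ t}) = Σ_{z₁} p₁(z₁)·Φ((r²/2 + σ²(log t − log γ₁(z₁)))/(σr))`. -/
theorem hybrid_clean_capacity
    {S : Type*} [Countable S] [MeasurableSpace S] [MeasurableSingletonClass S]
    (p₁ : S → ℝ) (hp₁nn : ∀ z, 0 ≤ p₁ z) (hp₁sum : ∑' z, p₁ z = 1)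
    (γ₁ : S → ℝ) (hγ₁ : ∀ z, 0 < γ₁ z)
    (D : ℕ) (hD : 1 ≤ D) (σ : ℝ) (hσ : 0 < σ)
    (x₂ Δ : Fin D → ℝ)
    (r : ℝ) (hr : r = Real.sqrt (∑ i, Δ i ^ 2)) (hr0 : 0 < r)
    (w : Measure (S × (Fin D → ℝ)))
    (hw : w = (discreteMeasure p₁).prod
      (Measure.pi (fun i => gaussianReal (x₂ i) ⟨σ ^ 2, sq_nonneg σ⟩)))
    (t : ℝ) (ht : 0 < t) :
    (w {q : S × (Fin D → ℝ) |
        γ₁ q.1 * Real.exp ((∑ i, Δ i * (q.2 i - x₂ i)) / σ ^ 2 - r ^ 2 / (2 * σ ^ 2))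
          ≤ t}).toReal
      = ∑' z₁, p₁ z₁ *
          stdNormalCDF ((r ^ 2 / 2 + σ ^ 2 * (Real.log t - Real.log (γ₁ z₁))) / (σ * r)) := by
  subst hw
  set ν := Measure.pi (fun i => gaussianReal (x₂ i) ⟨σ ^ 2, sq_nonneg σ⟩) with hν_def
  have hSq : ∑ i, Δ i ^ 2 = r ^ 2 := by
    rw [hr, Real.sq_sqrt (Finset.sum_nonneg fun i _ => sq_nonneg _)]
  set M : ℝ := ∑ i, Δ i * x₂ i with hM_def
  set c : S → ℝ := fun z => σ ^ 2 * (Real.log t - Real.log (γ₁ z)) + r ^ 2 / 2 with hc_def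
  have hγm : Measurable γ₁ := measurable_of_countable γ₁
  have hmeas : Measurable (fun q : S × (Fin D → ℝ) =>
      γ₁ q.1 * Real.exp ((∑ i, Δ i * (q.2 i - x₂ i)) / σ ^ 2 - r ^ 2 / (2 * σ ^ 2))) := by
    fun_prop
  have hA : MeasurableSet {q : S × (Fin D → ℝ) |
      γ₁ q.1 * Real.exp ((∑ i, Δ i * (q.2 i - x₂ i)) / σ ^ 2 - r ^ 2 / (2 * σ ^ 2)) ≤ t} :=
    measurableSet_le hmeas measurable_const
  have key : ∀ (z : S) (z₂ : Fin D → ℝ),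
      (γ₁ z * Real.exp ((∑ i, Δ i * (z₂ i - x₂ i)) / σ ^ 2 - r ^ 2 / (2 * σ ^ 2)) ≤ t)
        ↔ (∑ i, Δ i * z₂ i ≤ c z + M) := by
    intro z z₂
    have hL : (∑ i, Δ i * (z₂ i - x₂ i)) = (∑ i, Δ i * z₂ i) - M := by
      rw [hM_def, ← Finset.sum_sub_distrib]
      exact Finset.sum_congr rfl fun i _ => mul_sub _ _ _
    have hσ2 : (0:ℝ) < σ ^ 2 := by positivity
    have e1 : r ^ 2 / (2 * σ ^ 2) * σ ^ 2 = r ^ 2 / 2 := by field_simp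
    rw [mul_comm, ← le_div_iff₀ (hγ₁ z), ← Real.le_log_iff_exp_le (div_pos ht (hγ₁ z)),
      Real.log_div ht.ne' (hγ₁ z).ne', hL, sub_le_iff_le_add, div_le_iff₀ hσ2, add_mul, e1,
      sub_le_iff_le_add, hc_def]
    constructor <;> intro h <;> [linarith ; linarith]
  have hLmeas : Measurable (fun z₂ : Fin D → ℝ => ∑ i, Δ i * z₂ i) := by fun_prop
  have hslice : ∀ z : S, (Prod.mk z ⁻¹' {q : S × (Fin D → ℝ) |
      γ₁ q.1 * Real.exp ((∑ i, Δ i * (q.2 i - x₂ i)) / σ ^ 2 - r ^ 2 / (2 * σ ^ 2)) ≤ t})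
      = (fun z₂ : Fin D → ℝ => ∑ i, Δ i * z₂ i) ⁻¹' Iic (c z + M) := by
    intro z
    ext z₂
    simpa using key z z₂
  have hνslice : ∀ z : S, ν ((fun z₂ : Fin D → ℝ => ∑ i, Δ i * z₂ i) ⁻¹' Iic (c z + M))
      = gaussianReal 0 1
          (Iic ((r ^ 2 / 2 + σ ^ 2 * (Real.log t - Real.log (γ₁ z))) / (σ * r))) := by
    intro z
    rw [← Measure.map_apply hLmeas measurableSet_Iic, hν_def,
      map_pi_gaussian_linear D Δ x₂ ⟨σ ^ 2, sq_nonneg σ⟩]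
    have hV : ((∑ i, (Δ i ^ 2).toNNReal) * (show ℝ≥0 from ⟨σ ^ 2, sq_nonneg σ⟩))
        = (show ℝ≥0 from ⟨(σ * r) ^ 2, sq_nonneg _⟩) * 1 := by
      refine NNReal.coe_injective ?_
      rw [NNReal.coe_mul, NNReal.coe_mul, NNReal.coe_sum]
      simp_rw [Real.coe_toNNReal _ (sq_nonneg _)]
      rw [hSq]
      simp only [NNReal.coe_mk, NNReal.coe_one]
      show r ^ 2 * σ ^ 2 = (σ * r) ^ 2 * 1
      ring
    rw [hV]
    have h1 : gaussianReal (∑ i, Δ i * x₂ i) ((show ℝ≥0 from ⟨(σ * r) ^ 2, sq_nonneg _⟩) * 1)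
        = (gaussianReal 0 ((show ℝ≥0 from ⟨(σ * r) ^ 2, sq_nonneg _⟩) * 1)).map (· + M) := by
      rw [gaussianReal_map_add_const, zero_add, hM_def]
    rw [h1, Measure.map_apply (measurable_add_const M) measurableSet_Iic]
    have h2 : ((· + M) ⁻¹' Iic (c z + M)) = Iic (c z) := by
      ext x; simp
    rw [h2]
    have h3 : gaussianReal 0 ((show ℝ≥0 from ⟨(σ * r) ^ 2, sq_nonneg _⟩) * 1)
        = (gaussianReal 0 1).map ((σ * r) * ·) := by
      rw [gaussianReal_map_const_mul, mul_zero]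
      rfl
    rw [h3, Measure.map_apply (measurable_const_mul _) measurableSet_Iic]
    have h4 : (((σ * r) * ·) ⁻¹' Iic (c z)) = Iic (c z / (σ * r)) := by
      ext x
      simp only [mem_preimage, mem_Iic]
      rw [le_div_iff₀ (by positivity), mul_comm]
    rw [h4]
    congr 2
    rw [hc_def]
    ring
  haveI : SFinite ν := by
    rw [hν_def]
    haveI : ∀ i, SigmaFinite (gaussianReal (x₂ i) ⟨σ ^ 2, sq_nonneg σ⟩) := fun i => by
      haveI := instIsProbabilityMeasureGaussianReal (x₂ i) ⟨σ ^ 2, sq_nonneg σ⟩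
      infer_instance
    infer_instance
  rw [Measure.prod_apply hA, discreteMeasure, lintegral_sum_measure]
  simp_rw [lintegral_smul_measure, smul_eq_mul, lintegral_dirac, hslice, hνslice]
  rw [ENNReal.tsum_toReal_eq
    (fun z => ENNReal.mul_ne_top ENNReal.ofReal_ne_top (measure_ne_top _ _))]
  refine tsum_congr (fun z => ?_)
  rw [ENNReal.toReal_mul, ENNReal.toReal_ofReal (hp₁nn z)]
  rfl
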